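/- Every term of the Somos-5 sequence is a positive integer, and consecutive terms are strictly increasing from index 4 onward (a_4 < a_5 < a_6 < ...). -/
import Mathlib

def somos5 : ℕ → ℚ
  | 0 => 1
  | 1 => 1
  | 2 => 1
  | 3 => 1
  | 4 => 1
  | n + 5 => (somos5 (n + 4) * somos5 (n + 1) + somos5 (n + 3) * somos5 (n + 2)) / somos5 n

lemma somos5_pos (n : ℕ) : 0 < somos5 n := by
  have key : ∀ m, 0 < somos5 m ∧ 0 < somos5 (m+1) ∧ 0 < somos5 (m+2) ∧ 0 < somos5 (m+3) ∧
      0 < somos5 (m+4) := by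
    intro m
    induction m with
    | zero => norm_num [somos5]
    | succ k ih =>
      obtain ⟨h0, h1, h2, h3, h4⟩ := ih
      refine ⟨h1, h2, h3, h4, ?_⟩
      show 0 < somos5 (k+5)
      rw [somos5]
      positivity
  exact (key n).1

lemma somos5_rec (n : ℕ) : somos5 (n+5) * somos5 n =
    somos5 (n+4) * somos5 (n+1) + somos5 (n+3) * somos5 (n+2) := by
  have h := (somos5_pos n).ne'
  rw [somos5, div_mul_cancel₀ _ h]

def cc (n : ℕ) : ℤ := if n % 2 = 0 then 2 else 3

lemma cc_add_two (n : ℕ) : cc (n+2) = cc n := by simp [cc, Nat.add_mod]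

lemma somos5_rec4 (n : ℕ) : somos5 (n+4) * somos5 n =
    (cc n : ℚ) * (somos5 (n+3) * somos5 (n+1)) - somos5 (n+2)^2 := by
  have key : ∀ m, (somos5 (m+4) * somos5 m =
      (cc m : ℚ) * (somos5 (m+3) * somos5 (m+1)) - somos5 (m+2)^2) ∧
      (somos5 (m+5) * somos5 (m+1) =
      (cc (m+1) : ℚ) * (somos5 (m+4) * somos5 (m+2)) - somos5 (m+3)^2) := by
    intro m
    induction m with
    | zero => norm_num [somos5, cc]
    | succ k ih =>
      refine ⟨ih.2, ?_⟩
      have h1 := somos5_rec k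
      have h2 := somos5_rec (k+1)
      have h3 := ih.1
      have hnz : somos5 k * somos5 (k+1) ≠ 0 :=
        mul_ne_zero (somos5_pos k).ne' (somos5_pos (k+1)).ne'
      rw [show k+1+5 = k+6 by ring, show k+1+4 = k+5 by ring, show k+1+3 = k+4 by ring,
        show k+1+2 = k+3 by ring, show k+1+1 = k+2 by ring] at *
      rw [show cc (k+2) = cc k from cc_add_two k]
      have key2 : somos5 (k+6) * somos5 (k+2) * (somos5 k * somos5 (k+1)) =
          ((cc k : ℚ) * (somos5 (k+5) * somos5 (k+3)) - somos5 (k+4)^2) *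
          (somos5 k * somos5 (k+1)) := by
        linear_combination (somos5 k * somos5 (k+2)) * h2 + (somos5 k * somos5 (k+5)) * h3
          - (somos5 k * somos5 (k+4)) * h1
      exact mul_right_cancel₀ hnz key2
  exact (key n).1

lemma somos5_window (n : ℕ) : ∃ p q r s t u : ℤ,
    somos5 n = (p : ℚ) ∧ somos5 (n+1) = (q : ℚ) ∧ somos5 (n+2) = (r : ℚ) ∧
    somos5 (n+3) = (s : ℚ) ∧ somos5 (n+4) = (t : ℚ) ∧ somos5 (n+5) = (u : ℚ) ∧
    IsCoprime p q ∧ IsCoprime q r ∧ IsCoprime r s ∧ IsCoprime s t ∧ IsCoprime t u ∧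
    IsCoprime p r ∧ IsCoprime q s ∧ IsCoprime r t ∧ IsCoprime s u := by
  induction n with
  | zero =>
    refine ⟨1, 1, 1, 1, 1, 2, ?_, ?_, ?_, ?_, ?_, ?_, ?_, ?_, ?_, ?_, ?_, ?_, ?_, ?_, ?_⟩ <;>
      norm_num [somos5]
  | succ n ih =>
    obtain ⟨p, q, r, s, t, u, hp, hq, hr, hs, ht, hu, cpq, cqr, crs, cst, ctu, cpr, cqs, crt,
      csu⟩ := ih
    have hi5 : u * p = t * q + s * r := by
      have := somos5_rec n
      rw [hp, hq, hr, hs, ht, hu] at this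
      exact_mod_cast this
    have hi4 : t * p = cc n * (s * q) - r^2 := by
      have := somos5_rec4 n
      rw [hp, hq, hr, hs, ht] at this
      exact_mod_cast this
    set c : ℤ := cc n with hc
    have key : p^2 * (c * (u * s) - t^2) = r * (c * (s * q * r) + c * (s^2 * p) - r^3) := by
      linear_combination (c*s*p) * hi5 + (r^2 - t*p) * hi4
    have hdvd : r ∣ c * (u * s) - t^2 := by
      have h1 : r ∣ p^2 * (c * (u * s) - t^2) := ⟨_, key⟩
      exact (cpr.symm.pow_right (n := 2)).dvd_of_dvd_mul_left h1
    obtain ⟨v, hv⟩ := hdvd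
    have hrne : (r : ℚ) ≠ 0 := by
      rw [← hr]; exact (somos5_pos (n+2)).ne'
    have h6 : somos5 (n+6) = (v : ℚ) := by
      have h := somos5_rec4 (n+2)
      rw [show n+2+4 = n+6 by ring, show n+2+3 = n+5 by ring, show n+2+2 = n+4 by ring,
        show n+2+1 = n+3 by ring, cc_add_two] at h
      rw [hr, hs, ht, hu, ← hc] at h
      have h2 : somos5 (n+6) * (r:ℚ) = (r:ℚ) * (v:ℚ) := by
        rw [h]; exact_mod_cast congrArg (fun z : ℤ => (z : ℚ)) hv
      exact mul_right_cancel₀ hrne (h2.trans (mul_comm _ _))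
    have hi5' : v * q = u * r + t * s := by
      have h := somos5_rec (n+1)
      rw [show n+1+5 = n+6 by ring, show n+1+4 = n+5 by ring, show n+1+3 = n+4 by ring,
        show n+1+2 = n+3 by ring, show n+1+1 = n+2 by ring] at h
      rw [hq, hr, hs, ht, hu, h6] at h
      exact_mod_cast h
    have cuv : IsCoprime u v := by
      obtain ⟨x, y, hxy⟩ := (IsCoprime.mul_left ctu csu : IsCoprime (t*s) u)
      exact ⟨y - x*r, x*q, by linear_combination hxy + x * hi5'⟩
    have ctv : IsCoprime t v := by
      obtain ⟨x, y, hxy⟩ := (IsCoprime.mul_left ctu.symm crt : IsCoprime (u*r) t)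
      exact ⟨y - x*s, x*q, by linear_combination hxy + x * hi5'⟩
    exact ⟨q, r, s, t, u, v, hq, by rwa [show n+1+1 = n+2 by ring],
      by rwa [show n+1+2 = n+3 by ring], by rwa [show n+1+3 = n+4 by ring],
      by rwa [show n+1+4 = n+5 by ring], by rwa [show n+1+5 = n+6 by ring],
      cqr, crs, cst, ctu, cuv, cqs, crt, csu, ctv⟩

lemma somos5_mono_weak (n : ℕ) : somos5 n ≤ somos5 (n+1) := by
  induction n using Nat.strong_induction_on with
  | _ n ih =>
    match n with
    | 0 => norm_num [somos5]
    | 1 => norm_num [somos5]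
    | 2 => norm_num [somos5]
    | 3 => norm_num [somos5]
    | (k+4) =>
      have hk := ih k (by omega)
      have h := somos5_rec k
      have p0 := somos5_pos k
      have p1 := somos5_pos (k+1)
      have p2 := somos5_pos (k+2)
      have p3 := somos5_pos (k+3)
      have p4 := somos5_pos (k+4)
      nlinarith [mul_pos p2 p3, mul_pos p0 p4]

lemma somos5_strict (k : ℕ) : somos5 (k+4) < somos5 (k+5) := by
  have hk := somos5_mono_weak k
  have h := somos5_rec k
  have p0 := somos5_pos k
  have p2 := somos5_pos (k+2)
  have p3 := somos5_pos (k+3)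
  have p4 := somos5_pos (k+4)
  nlinarith [mul_pos p2 p3, mul_pos p0 p4]

theorem stmt17 : (∀ n : ℕ, ∃ k : ℕ, 0 < k ∧ somos5 n = (k : ℚ)) ∧ ∀ n ≥ 4, somos5 n < somos5 (n + 1) := by
  constructor
  · intro n
    obtain ⟨p, q, r, s, t, u, hp, -⟩ := somos5_window n
    have hppos : 0 < p := by
      have := somos5_pos n
      rw [hp] at this
      exact_mod_cast this
    refine ⟨p.toNat, by omega, ?_⟩
    rw [hp]
    norm_cast
    omega
  · intro n hn
    obtain ⟨k, rfl⟩ : ∃ k, n = k + 4 := ⟨n - 4, by omega⟩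
    exact somos5_strict k
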